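/- Let p₁, p₂, p₃, p₄ be pairwise distinct nonzero complex numbers and let x, y be nonzero complex numbers such that pᵢ ≠ x and pᵢ ≠ y for all i, and such that p₁p₂ ≠ xy and p₃p₄ ≠ xy. Set qᵢ = pᵢ/((pᵢ − x)(pᵢ − y)) and rᵢ = pᵢ + xy/pᵢ for i = 1,2,3,4. Then cr(q₁,q₂,q₃,q₄) = cr(r₁,r₂,r₃,r₄). In particular, the cross-ratio of the four points qᵢ depends only on the product z = xy and not on x and y individually. -/

import Mathlib

/-- The cross-ratio `[q₁ : q₂ ; q₃ : q₄]` of an ordered quadruple of complex numbers. -/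
noncomputable def cr (q₁ q₂ q₃ q₄ : ℂ) : ℂ :=
  ((q₄ - q₁) * (q₂ - q₃)) / ((q₂ - q₁) * (q₄ - q₃))

lemma diffq (a b x y : ℂ) (ha : (a - x) * (a - y) ≠ 0) (hb : (b - x) * (b - y) ≠ 0) :
    a / ((a - x) * (a - y)) - b / ((b - x) * (b - y))
      = (b - a) * (a * b - x * y) / (((a - x) * (a - y)) * ((b - x) * (b - y))) := by
  rw [div_sub_div _ _ ha hb]
  ring

lemma diffr (a b x y : ℂ) (ha : a ≠ 0) (hb : b ≠ 0) :
    (a + x * y / a) - (b + x * y / b) = (a - b) * (a * b - x * y) / (a * b) := by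
  field_simp
  ring

lemma key (A B C D u v w t : ℂ) (hu : u ≠ 0) (hv : v ≠ 0) (hw : w ≠ 0) (ht : t ≠ 0) :
    (A / (t * u) * (B / (v * w))) / ((C / (v * u)) * (D / (t * w))) = (A * B) / (C * D) := by
  rw [div_mul_div_comm, div_mul_div_comm, div_div_div_eq]
  have h : t * u * (v * w) * (C * D) = C * D * (v * u * (t * w)) := by ring
  rw [h, mul_div_mul_right _ _ (mul_ne_zero (mul_ne_zero hv hu) (mul_ne_zero ht hw))]

theorem crossRatio_nodal_cubic_depends_only_on_product
    (p₁ p₂ p₃ p₄ x y : ℂ)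
    (hp₁ : p₁ ≠ 0) (hp₂ : p₂ ≠ 0) (hp₃ : p₃ ≠ 0) (hp₄ : p₄ ≠ 0)
    (h12 : p₁ ≠ p₂) (h13 : p₁ ≠ p₃) (h14 : p₁ ≠ p₄)
    (h23 : p₂ ≠ p₃) (h24 : p₂ ≠ p₄) (h34 : p₃ ≠ p₄)
    (hx : x ≠ 0) (hy : y ≠ 0)
    (h1x : p₁ ≠ x) (h2x : p₂ ≠ x) (h3x : p₃ ≠ x) (h4x : p₄ ≠ x)
    (h1y : p₁ ≠ y) (h2y : p₂ ≠ y) (h3y : p₃ ≠ y) (h4y : p₄ ≠ y)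
    (hA : p₁ * p₂ ≠ x * y) (hB : p₃ * p₄ ≠ x * y) :
    cr (p₁ / ((p₁ - x) * (p₁ - y))) (p₂ / ((p₂ - x) * (p₂ - y)))
       (p₃ / ((p₃ - x) * (p₃ - y))) (p₄ / ((p₄ - x) * (p₄ - y)))
      = cr (p₁ + x * y / p₁) (p₂ + x * y / p₂) (p₃ + x * y / p₃) (p₄ + x * y / p₄) := by
  have d₁ : (p₁ - x) * (p₁ - y) ≠ 0 :=
    mul_ne_zero (sub_ne_zero.mpr h1x) (sub_ne_zero.mpr h1y)
  have d₂ : (p₂ - x) * (p₂ - y) ≠ 0 :=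
    mul_ne_zero (sub_ne_zero.mpr h2x) (sub_ne_zero.mpr h2y)
  have d₃ : (p₃ - x) * (p₃ - y) ≠ 0 :=
    mul_ne_zero (sub_ne_zero.mpr h3x) (sub_ne_zero.mpr h3y)
  have d₄ : (p₄ - x) * (p₄ - y) ≠ 0 :=
    mul_ne_zero (sub_ne_zero.mpr h4x) (sub_ne_zero.mpr h4y)
  rw [cr, cr, diffq p₄ p₁ x y d₄ d₁, diffq p₂ p₃ x y d₂ d₃,
    diffq p₂ p₁ x y d₂ d₁, diffq p₄ p₃ x y d₄ d₃,
    diffr p₄ p₁ x y hp₄ hp₁, diffr p₂ p₃ x y hp₂ hp₃,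
    diffr p₂ p₁ x y hp₂ hp₁, diffr p₄ p₃ x y hp₄ hp₃,
    key _ _ _ _ _ _ _ _ d₁ d₂ d₃ d₄, key _ _ _ _ _ _ _ _ hp₁ hp₂ hp₃ hp₄]
  ring
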